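/- arXiv:math/0411392 — 2 statements merged into one kernel-verified Lean document; each statement's English description precedes it below -/
import Mathlib

section
/- Suppose the Verblunsky coefficients satisfy |α_n| ≤ C q^n for all n ≥ 0, where C > 0 and q ∈ (0,1), and set C_1 = ∏_{j=0}^∞ (1 + C q^j). Then for every n ≥ 0 and every z with 1 ≤ |z| < 1/q, one has |Φ_n*(z)| ≤ 1 + C_1 C |z| (1 − q|z|)^{-1}. -/
open Polynomial Filter Topology

/-- The monic orthogonal polynomials on the unit circle, defined by the Szegő
recursion `Φ₀ = 1`, `Φ_{n+1}(z) = z Φ_n(z) - conj(α_n) Φ_n^*(z)`, where the reversed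
polynomial is `P^*(z) = Σ_{j=0}^n conj(c_{n-j}) z^j`. -/
noncomputable def PhiP (α : ℕ → ℂ) : ℕ → Polynomial ℂ
  | 0 => 1
  | n + 1 => X * PhiP α n -
      Polynomial.C ((starRingEnd ℂ) (α n)) *
        Polynomial.reflect n (Polynomial.map (starRingEnd ℂ) (PhiP α n))

/-- The reversed polynomial `Φ_n^*(z) = z^n conj(Φ_n(1/conj z))`. -/
noncomputable def PhiStarP (α : ℕ → ℂ) (n : ℕ) : Polynomial ℂ :=
  Polynomial.reflect n (Polynomial.map (starRingEnd ℂ) (PhiP α n))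

lemma natDegree_reflect_le' {p : Polynomial ℂ} {n : ℕ} (hp : p.natDegree ≤ n) :
    (Polynomial.reflect n p).natDegree ≤ n := by
  rw [Polynomial.natDegree_le_iff_coeff_eq_zero] at *
  intro N hN
  rw [Polynomial.coeff_reflect, Polynomial.revAt_eq_self_of_lt hN]
  exact hp N hN

lemma natDegree_PhiP_le (α : ℕ → ℂ) : ∀ n, (PhiP α n).natDegree ≤ n := by
  intro n
  induction n with
  | zero => simp [PhiP]
  | succ n ih =>
    rw [PhiP]
    refine le_trans (Polynomial.natDegree_sub_le _ _) ?_
    simp only [max_le_iff]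
    constructor
    · refine le_trans (Polynomial.natDegree_mul_le) ?_
      rw [Polynomial.natDegree_X]
      omega
    · refine le_trans (Polynomial.natDegree_mul_le) ?_
      have h1 : (Polynomial.map (starRingEnd ℂ) (PhiP α n)).natDegree ≤ n :=
        le_trans Polynomial.natDegree_map_le ih
      simpa [Polynomial.natDegree_C] using le_trans (natDegree_reflect_le' h1) (Nat.le_succ n)

lemma reflect_succ_of_le {p : Polynomial ℂ} {n : ℕ} (hp : p.natDegree ≤ n) :
    Polynomial.reflect (n + 1) p = X * Polynomial.reflect n p := by
  ext i
  rcases i with _ | j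
  · simp only [Polynomial.coeff_reflect, Polynomial.revAt_zero, Polynomial.mul_coeff_zero,
      Polynomial.coeff_X_zero, zero_mul]
    exact Polynomial.coeff_eq_zero_of_natDegree_lt (lt_of_le_of_lt hp (Nat.lt_succ_self n))
  · rw [Polynomial.coeff_X_mul, Polynomial.coeff_reflect, Polynomial.coeff_reflect]
    rcases le_or_gt j n with h | h
    · rw [Polynomial.revAt_le h, Polynomial.revAt_le (by omega)]
      congr 1; omega
    · rw [Polynomial.revAt_eq_self_of_lt h, Polynomial.revAt_eq_self_of_lt (by omega)]
      rw [Polynomial.coeff_eq_zero_of_natDegree_lt (by omega),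
        Polynomial.coeff_eq_zero_of_natDegree_lt (by omega)]

lemma reflect_reflect_of_le {p : Polynomial ℂ} {n : ℕ} :
    Polynomial.reflect n (Polynomial.reflect n p) = p := by
  ext i
  rw [Polynomial.coeff_reflect, Polynomial.coeff_reflect, Polynomial.revAt_invol]

lemma PhiStarP_succ (α : ℕ → ℂ) (n : ℕ) :
    PhiStarP α (n + 1) = PhiStarP α n - Polynomial.C (α n) * (X * PhiP α n) := by
  have hdeg := natDegree_PhiP_le α n
  have hQdeg : (Polynomial.map (starRingEnd ℂ) (PhiP α n)).natDegree ≤ n :=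
    le_trans Polynomial.natDegree_map_le hdeg
  rw [PhiStarP, PhiP]
  rw [Polynomial.map_sub, Polynomial.map_mul, Polynomial.map_mul, Polynomial.reflect_sub]
  simp only [Polynomial.map_X, Polynomial.map_C]
  rw [← Polynomial.reflect_map]
  have hmapmap : Polynomial.map (starRingEnd ℂ) (Polynomial.map (starRingEnd ℂ) (PhiP α n))
      = PhiP α n := by
    rw [Polynomial.map_map]
    simp
  rw [hmapmap]
  have h1 : Polynomial.reflect (n + 1)
      (X * Polynomial.map (starRingEnd ℂ) (PhiP α n)) =
      Polynomial.reflect n (Polynomial.map (starRingEnd ℂ) (PhiP α n)) := by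
    have := Polynomial.reflect_mul (X : Polynomial ℂ)
      (Polynomial.map (starRingEnd ℂ) (PhiP α n))
      (F := 1) (G := n) (Polynomial.natDegree_X_le) hQdeg
    rw [add_comm 1 n] at this
    rw [this, Polynomial.reflect_one_X, one_mul]
  have h2 : Polynomial.reflect (n + 1)
      (Polynomial.C ((starRingEnd ℂ) ((starRingEnd ℂ) (α n))) *
        Polynomial.reflect n (PhiP α n)) =
      Polynomial.C (α n) * (X * PhiP α n) := by
    rw [Polynomial.reflect_C_mul]
    simp only [RingHomCompTriple.comp_apply, Complex.conj_conj]
    rw [reflect_succ_of_le (natDegree_reflect_le' hdeg), reflect_reflect_of_le]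
  rw [h1, h2, PhiStarP]

theorem stmt_1 (α : ℕ → ℂ) (hα : ∀ n, ‖α n‖ < 1)
    (C q : ℝ) (hC : 0 < C) (hq0 : 0 < q) (hq1 : q < 1)
    (hdecay : ∀ n : ℕ, ‖α n‖ ≤ C * q ^ n)
    (C₁ : ℝ) (hC₁ : HasProd (fun j : ℕ => 1 + C * q ^ j) C₁) :
    ∀ n : ℕ, ∀ z : ℂ, 1 ≤ ‖z‖ → ‖z‖ < 1 / q →
      ‖(PhiStarP α n).eval z‖ ≤
        1 + C₁ * C * ‖z‖ * (1 - q * ‖z‖)⁻¹ := by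
  intro n z hz1 hz2
  set a := ‖z‖ with ha
  have ha0 : (0:ℝ) ≤ a := norm_nonneg z
  have hqa : q * a < 1 := by
    rw [lt_div_iff₀ hq0] at hz2
    linarith [mul_comm q a]
  have hqa0 : 0 ≤ q * a := mul_nonneg hq0.le ha0
  -- partial products bounded by C₁
  set P : ℕ → ℝ := fun n => ∏ j ∈ Finset.range n, (1 + C * q ^ j) with hP
  have hfac : ∀ j : ℕ, (1:ℝ) ≤ 1 + C * q ^ j := fun j => by
    nlinarith [pow_pos hq0 j]
  have hPpos : ∀ m, (0:ℝ) < P m := fun m =>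
    Finset.prod_pos (fun i _ => lt_of_lt_of_le one_pos (hfac i))
  have hP1 : ∀ m, (1:ℝ) ≤ P m := by
    intro m
    induction m with
    | zero => simp [hP]
    | succ m ih =>
      simp only [hP, Finset.prod_range_succ] at *
      nlinarith [hfac m]
  have hPmono : Monotone P := by
    refine monotone_nat_of_le_succ fun m => ?_
    have h1 := hPpos m
    have h2 := hfac m
    simp only [hP, Finset.prod_range_succ] at *
    nlinarith
  have hPle : ∀ m, P m ≤ C₁ := by
    intro m
    refine ge_of_tendsto hC₁.tendsto_prod_nat ?_
    filter_upwards [eventually_ge_atTop m] with k hk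
    exact hPmono hk
  -- joint induction bound
  have key : ∀ m, ‖(PhiP α m).eval z‖ ≤ P m * a ^ m ∧
      ‖(PhiStarP α m).eval z‖ ≤ P m * a ^ m := by
    intro m
    induction m with
    | zero => simp [PhiP, PhiStarP, hP]
    | succ m ih =>
      obtain ⟨ih1, ih2⟩ := ih
      have hPsucc : P (m + 1) = P m * (1 + C * q ^ m) := by
        simp only [hP, Finset.prod_range_succ]
      have haux : a ^ m ≤ a ^ (m + 1) := by
        calc a ^ m = a ^ m * 1 := by ring
        _ ≤ a ^ m * a := by
              exact mul_le_mul_of_nonneg_left hz1 (pow_nonneg ha0 m)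
        _ = a ^ (m+1) := by ring
      have hαm := hdecay m
      have hαm0 := norm_nonneg (α m)
      have hPm0 : 0 < P m := hPpos m
      constructor
      · rw [PhiP]
        simp only [Polynomial.eval_sub, Polynomial.eval_mul, Polynomial.eval_X,
          Polynomial.eval_C]
        refine le_trans (norm_sub_le _ _) ?_
        rw [norm_mul, norm_mul]
        have hb1 : ‖z‖ * ‖(PhiP α m).eval z‖ ≤ a * (P m * a ^ m) :=
          mul_le_mul_of_nonneg_left ih1 ha0
        have hb2 : ‖(starRingEnd ℂ) (α m)‖ *
            ‖(Polynomial.reflect m (Polynomial.map (starRingEnd ℂ) (PhiP α m))).eval z‖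
            ≤ (C * q ^ m) * (P m * a ^ m) := by
          rw [Complex.norm_conj]
          exact mul_le_mul hαm ih2 (norm_nonneg _)
            (by positivity)
        calc ‖z‖ * ‖(PhiP α m).eval z‖ +
              ‖(starRingEnd ℂ) (α m)‖ *
              ‖(Polynomial.reflect m (Polynomial.map (starRingEnd ℂ) (PhiP α m))).eval z‖
            ≤ a * (P m * a ^ m) + (C * q ^ m) * (P m * a ^ m) := by
              exact add_le_add hb1 hb2
          _ = P m * a ^ (m+1) + (C * q ^ m) * (P m * a ^ m) := by ring
          _ ≤ P m * a ^ (m+1) + (C * q ^ m) * (P m * a ^ (m+1)) := by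
              have : (0:ℝ) ≤ C * q ^ m := by positivity
              nlinarith [mul_le_mul_of_nonneg_left haux hPm0.le]
          _ = P (m+1) * a ^ (m+1) := by rw [hPsucc]; ring
      · rw [PhiStarP_succ]
        simp only [Polynomial.eval_sub, Polynomial.eval_mul, Polynomial.eval_X,
          Polynomial.eval_C]
        refine le_trans (norm_sub_le _ _) ?_
        rw [norm_mul, norm_mul]
        calc ‖(PhiStarP α m).eval z‖ +
              ‖α m‖ * (‖z‖ * ‖(PhiP α m).eval z‖)
            ≤ P m * a ^ m + (C * q ^ m) * (a * (P m * a ^ m)) := by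
              refine add_le_add ih2 ?_
              exact mul_le_mul hαm (mul_le_mul_of_nonneg_left ih1 ha0)
                (by positivity) (by positivity)
          _ ≤ P m * a ^ (m+1) + (C * q ^ m) * (P m * a ^ (m+1)) := by
              have h1 : P m * a ^ m ≤ P m * a ^ (m+1) :=
                mul_le_mul_of_nonneg_left haux hPm0.le
              have h2 : (C * q ^ m) * (a * (P m * a ^ m)) = (C*q^m) * (P m * a^(m+1)) := by
                ring
              nlinarith
          _ = P (m+1) * a ^ (m+1) := by rw [hPsucc]; ring
  -- telescoping
  have htel : (PhiStarP α n).eval z = (PhiStarP α 0).eval z -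
      ∑ k ∈ Finset.range n, α k * z * (PhiP α k).eval z := by
    induction n with
    | zero => simp
    | succ n ih =>
      rw [Finset.sum_range_succ, PhiStarP_succ]
      simp only [Polynomial.eval_sub, Polynomial.eval_mul, Polynomial.eval_X,
        Polynomial.eval_C]
      rw [ih]; ring
  have h0 : (PhiStarP α 0).eval z = 1 := by
    simp [PhiStarP, PhiP]
  rw [htel, h0]
  refine le_trans (norm_sub_le _ _) ?_
  rw [norm_one]
  have hsum : ‖∑ k ∈ Finset.range n, α k * z * (PhiP α k).eval z‖
      ≤ ∑ k ∈ Finset.range n, C₁ * C * a * (q * a) ^ k := by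
    refine le_trans (norm_sum_le _ _) (Finset.sum_le_sum ?_)
    intro k _
    rw [norm_mul, norm_mul]
    have hφ : ‖(PhiP α k).eval z‖ ≤ C₁ * a ^ k :=
      le_trans (key k).1 (mul_le_mul_of_nonneg_right (hPle k) (pow_nonneg ha0 k))
    have hC₁1 : (1:ℝ) ≤ C₁ := le_trans (hP1 0) (hPle 0)
    calc ‖α k‖ * ‖z‖ * ‖(PhiP α k).eval z‖
        ≤ (C * q ^ k) * a * (C₁ * a ^ k) := by
          refine mul_le_mul ?_ hφ (norm_nonneg _) (by positivity)
          exact mul_le_mul_of_nonneg_right (hdecay k) ha0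
      _ = C₁ * C * a * (q * a) ^ k := by rw [mul_pow]; ring
  refine le_trans (add_le_add_right hsum 1) ?_
  have hgeo : ∑ k ∈ Finset.range n, (q * a) ^ k ≤ (1 - q * a)⁻¹ :=
    sum_le_hasSum (Finset.range n) (fun i _ => pow_nonneg hqa0 i)
      (hasSum_geometric_of_lt_one hqa0 hqa)
  have hC₁1 : (1:ℝ) ≤ C₁ := le_trans (hP1 0) (hPle 0)
  have hcoef : (0:ℝ) ≤ C₁ * C * a := by positivity
  have : ∑ k ∈ Finset.range n, C₁ * C * a * (q * a) ^ k
      = C₁ * C * a * ∑ k ∈ Finset.range n, (q * a) ^ k := by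
    rw [Finset.mul_sum]
  rw [this]
  exact add_le_add_right (mul_le_mul_of_nonneg_left hgeo hcoef) 1
end

section
/- Let α be Verblunsky coefficients with α_n ≠ 0 for all n and lim_{n→∞} α_n/α_{n−1} = b ∈ (0,1). Then for every ε ∈ (0,b), uniformly on {|z| ≤ b − ε}, lim_{n→∞} Φ_n(z)/conj(α_{n−1}) = −S(z) (1 − z/b)^{-1}. -/
open Polynomial Filter Topology

lemma reflect_reflect' {R : Type*} [Semiring R] (N : ℕ) (p : R[X]) :
    reflect N (reflect N p) = p := by
  ext i
  rw [coeff_reflect, coeff_reflect, revAt_invol]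

lemma natDegree_reflect_le {R : Type*} [Semiring R] {p : R[X]} {N : ℕ}
    (h : p.natDegree ≤ N) : (reflect N p).natDegree ≤ N := by
  rw [natDegree_le_iff_coeff_eq_zero]
  intro i hi
  rw [coeff_reflect, revAt_eq_self_of_lt hi]
  exact coeff_eq_zero_of_natDegree_lt (lt_of_le_of_lt h hi)

lemma phiP_natDegree_le (α : ℕ → ℂ) (n : ℕ) : (PhiP α n).natDegree ≤ n := by
  induction n with
  | zero => simp [PhiP]
  | succ n ih =>
    rw [PhiP]
    refine le_trans (natDegree_sub_le _ _) (max_le ?_ ?_)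
    · refine le_trans (natDegree_mul_le (p := (X : ℂ[X]))
        (q := PhiP α n)) ?_
      have := add_le_add (natDegree_X_le (R := ℂ)) ih
      omega
    · exact le_trans (natDegree_C_mul_le _ _)
        (le_trans (natDegree_reflect_le (by simpa using ih)) (Nat.le_succ n))

lemma reflect_succ_reflect {R : Type*} [CommSemiring R] {p : R[X]} {n : ℕ}
    (h : p.natDegree ≤ n) : reflect (n + 1) (reflect n p) = X * p := by
  have h1 : reflect (n + 1) (X * p) = reflect n p := by
    have : reflect (1 + n) (X * p) = reflect 1 X * reflect n p :=
      reflect_mul X p natDegree_X_le h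
    rw [add_comm 1 n] at this
    rw [this]
    have : reflect 1 (X : R[X]) = 1 := by
      have := reflect_monomial 1 1 (R := R)
      simpa using this
    rw [this, one_mul]
  rw [← h1, reflect_reflect']

lemma phiStarP_succ (α : ℕ → ℂ) (n : ℕ) :
    PhiStarP α (n + 1) = PhiStarP α n - Polynomial.C (α n) * X * PhiP α n := by
  have hdeg := phiP_natDegree_le α n
  have hdegm : (Polynomial.map (starRingEnd ℂ) (PhiP α n)).natDegree ≤ n := by
    simpa using hdeg
  rw [PhiStarP, PhiP, Polynomial.map_sub, Polynomial.map_mul, Polynomial.map_mul,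
    reflect_sub, map_C]
  congr 1
  · rw [Polynomial.map_X]
    have : reflect (n + 1) (X * Polynomial.map (starRingEnd ℂ) (PhiP α n))
        = reflect 1 X * reflect n (Polynomial.map (starRingEnd ℂ) (PhiP α n)) := by
      have := reflect_mul (X : ℂ[X]) (Polynomial.map (starRingEnd ℂ) (PhiP α n))
        natDegree_X_le hdegm
      rwa [add_comm 1 n] at this
    rw [this]
    have h1 : reflect 1 (X : ℂ[X]) = 1 := by simpa using reflect_monomial 1 1 (R := ℂ)
    rw [h1, one_mul, PhiStarP]
  · rw [reflect_C_mul]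
    have hmm : Polynomial.map (starRingEnd ℂ)
        (reflect n (Polynomial.map (starRingEnd ℂ) (PhiP α n))) = reflect n (PhiP α n) := by
      rw [← reflect_map, Polynomial.map_map]
      congr 1
      · ext x; simp
    rw [hmm]
    have : ((starRingEnd ℂ) ((starRingEnd ℂ) (α n))) = α n := by simp
    rw [this, reflect_succ_reflect hdeg]
    ring

lemma eval_phiP_succ (α : ℕ → ℂ) (n : ℕ) (z : ℂ) :
    (PhiP α (n + 1)).eval z =
      z * (PhiP α n).eval z - (starRingEnd ℂ) (α n) * (PhiStarP α n).eval z := by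
  rw [PhiP]
  simp [PhiStarP]

lemma eval_phiStarP_succ (α : ℕ → ℂ) (n : ℕ) (z : ℂ) :
    (PhiStarP α (n + 1)).eval z =
      (PhiStarP α n).eval z - α n * z * (PhiP α n).eval z := by
  rw [phiStarP_succ]
  simp

lemma eval_phiP_zero (α : ℕ → ℂ) (z : ℂ) : (PhiP α 0).eval z = 1 := by simp [PhiP]

lemma eval_phiStarP_zero (α : ℕ → ℂ) (z : ℂ) : (PhiStarP α 0).eval z = 1 := by
  simp [PhiStarP, PhiP]

noncomputable def Complex.abs : AbsoluteValue ℂ ℝ where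
  toFun z := ‖z‖
  map_mul' := norm_mul
  nonneg' := norm_nonneg
  eq_zero' _ := norm_eq_zero
  add_le' := norm_add_le

lemma Complex.abs_apply (z : ℂ) : Complex.abs z = ‖z‖ := rfl

lemma Complex.abs_conj (z : ℂ) : Complex.abs ((starRingEnd ℂ) z) = Complex.abs z :=
  Complex.norm_conj z

lemma Complex.continuous_abs : Continuous Complex.abs := continuous_norm

lemma Complex.abs_ofReal (r : ℝ) : Complex.abs (r : ℂ) = |r| := Complex.norm_real r

lemma phi_bound (α : ℕ → ℂ) (z : ℂ) (hz : Complex.abs z ≤ 1) (n : ℕ) :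
    Complex.abs ((PhiP α n).eval z) ≤ ∏ k ∈ Finset.range n, (1 + Complex.abs (α k)) ∧
    Complex.abs ((PhiStarP α n).eval z) ≤ ∏ k ∈ Finset.range n, (1 + Complex.abs (α k)) := by
  induction n with
  | zero => simp [eval_phiP_zero, eval_phiStarP_zero]
  | succ n ih =>
    obtain ⟨h1, h2⟩ := ih
    have hB : (0:ℝ) ≤ ∏ k ∈ Finset.range n, (1 + Complex.abs (α k)) :=
      Finset.prod_nonneg fun k _ => by have := AbsoluteValue.nonneg Complex.abs (α k); positivity
    rw [Finset.prod_range_succ]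
    constructor
    · rw [eval_phiP_succ]
      refine le_trans (AbsoluteValue.sub_le_add _ _ _) ?_
      rw [map_mul, map_mul]
      have e1 : Complex.abs z * Complex.abs ((PhiP α n).eval z) ≤
          ∏ k ∈ Finset.range n, (1 + Complex.abs (α k)) := by
        calc Complex.abs z * Complex.abs ((PhiP α n).eval z)
            ≤ 1 * (∏ k ∈ Finset.range n, (1 + Complex.abs (α k))) := by
              exact mul_le_mul hz h1 (AbsoluteValue.nonneg _ _) zero_le_one
          _ = _ := one_mul _
      have e2 : Complex.abs ((starRingEnd ℂ) (α n)) * Complex.abs ((PhiStarP α n).eval z) ≤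
          Complex.abs (α n) * ∏ k ∈ Finset.range n, (1 + Complex.abs (α k)) := by
        rw [Complex.abs_conj]
        exact mul_le_mul_of_nonneg_left h2 (AbsoluteValue.nonneg _ _)
      calc _ ≤ (∏ k ∈ Finset.range n, (1 + Complex.abs (α k))) +
            Complex.abs (α n) * ∏ k ∈ Finset.range n, (1 + Complex.abs (α k)) :=
            add_le_add e1 e2
        _ = _ := by ring
    · rw [eval_phiStarP_succ]
      refine le_trans (AbsoluteValue.sub_le_add _ _ _) ?_
      rw [map_mul, map_mul]
      have e2 : Complex.abs (α n) * Complex.abs z * Complex.abs ((PhiP α n).eval z) ≤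
          Complex.abs (α n) * ∏ k ∈ Finset.range n, (1 + Complex.abs (α k)) := by
        calc Complex.abs (α n) * Complex.abs z * Complex.abs ((PhiP α n).eval z)
            ≤ Complex.abs (α n) * 1 * (∏ k ∈ Finset.range n, (1 + Complex.abs (α k))) := by
              refine mul_le_mul ?_ h1 (AbsoluteValue.nonneg _ _) (by positivity)
              exact mul_le_mul_of_nonneg_left hz (AbsoluteValue.nonneg _ _)
          _ = _ := by ring
      calc _ ≤ (∏ k ∈ Finset.range n, (1 + Complex.abs (α k))) +
            Complex.abs (α n) * ∏ k ∈ Finset.range n, (1 + Complex.abs (α k)) :=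
            add_le_add h2 e2
        _ = _ := by ring

lemma tendsto_zero_of_contract {u d : ℕ → ℝ} {θ : ℝ} (hθ0 : 0 ≤ θ) (hθ1 : θ < 1)
    (hu : ∀ n, 0 ≤ u n) (hd : Tendsto d atTop (nhds 0))
    (hrec : ∀ n, u (n + 1) ≤ θ * u n + d n) : Tendsto u atTop (nhds 0) := by
  rw [Metric.tendsto_atTop]
  intro η hη
  have hpos : 0 < η * (1 - θ) / 2 := by
    have : 0 < 1 - θ := by linarith
    positivity
  obtain ⟨N₁, hN₁⟩ := (Metric.tendsto_atTop.mp hd) (η * (1 - θ) / 2) hpos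
  have key : ∀ j : ℕ, u (N₁ + j) ≤ θ ^ j * u N₁ + η / 2 := by
    intro j
    induction j with
    | zero => simp; linarith [hη]
    | succ j ih =>
      have hdle : d (N₁ + j) ≤ η * (1 - θ) / 2 := by
        have := hN₁ (N₁ + j) (Nat.le_add_right _ _)
        rw [Real.dist_eq, sub_zero] at this
        exact le_of_lt (lt_of_abs_lt this)
      have : u (N₁ + j + 1) ≤ θ * u (N₁ + j) + d (N₁ + j) := hrec _
      have h2 : θ * u (N₁ + j) ≤ θ * (θ ^ j * u N₁ + η / 2) :=
        mul_le_mul_of_nonneg_left ih hθ0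
      have h3 : u (N₁ + (j + 1)) ≤ θ * (θ ^ j * u N₁ + η / 2) + η * (1 - θ) / 2 := by
        have e : N₁ + (j + 1) = N₁ + j + 1 := by omega
        rw [e]
        linarith
      calc u (N₁ + (j + 1)) ≤ θ * (θ ^ j * u N₁ + η / 2) + η * (1 - θ) / 2 := h3
        _ = θ ^ (j + 1) * u N₁ + (θ * η / 2 + η * (1 - θ) / 2) := by ring
        _ ≤ θ ^ (j + 1) * u N₁ + η / 2 := by nlinarith
  have hpow : Tendsto (fun j : ℕ => θ ^ j * u N₁) atTop (nhds 0) := by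
    have := tendsto_pow_atTop_nhds_zero_of_lt_one hθ0 hθ1
    simpa using this.mul_const (u N₁)
  obtain ⟨J, hJ⟩ := (Metric.tendsto_atTop.mp hpow) (η / 2) (by linarith)
  refine ⟨N₁ + J, fun n hn => ?_⟩
  have hj : n = N₁ + (n - N₁) := by omega
  have hjJ : J ≤ n - N₁ := by omega
  have h1 : u n ≤ θ ^ (n - N₁) * u N₁ + η / 2 := by
    have := key (n - N₁); rwa [← hj] at this
  have h2 : θ ^ (n - N₁) * u N₁ < η / 2 := by
    have := hJ (n - N₁) hjJ
    rw [Real.dist_eq, sub_zero] at this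
    exact lt_of_abs_lt this
  rw [Real.dist_eq, sub_zero, abs_of_nonneg (hu n)]
  linarith

theorem stmt_9 (α : ℕ → ℂ) (hα : ∀ n, ‖α n‖ < 1)
    (hnz : ∀ n, α n ≠ 0) (b : ℝ) (hb0 : 0 < b) (hb1 : b < 1)
    (hratio : Tendsto (fun n : ℕ => α (n + 1) / α n) atTop (nhds (b : ℂ)))
    (S : ℂ → ℂ)
    (hS : ∀ z : ℂ, ‖z‖ < 1 / b →
      Tendsto (fun n : ℕ => (PhiStarP α n).eval z) atTop (nhds (S z)))
 :
    ∀ ε : ℝ, 0 < ε → ε < b →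
      TendstoUniformlyOn
        (fun (n : ℕ) (z : ℂ) => (PhiP α n).eval z / (starRingEnd ℂ) (α (n - 1)))
        (fun z : ℂ => -S z * (1 - z / (b : ℂ))⁻¹) atTop
        {z : ℂ | ‖z‖ ≤ b - ε} := by
  intro ε hε hεb
  have hbC : (b : ℂ) ≠ 0 := by
    simpa using ne_of_gt hb0
  have hbε1 : b - ε ≤ 1 := by linarith
  have hbε0 : 0 < b - ε := by linarith
  -- ratio of absolute values
  have habs : Tendsto (fun n => Complex.abs (α (n + 1) / α n)) atTop (nhds b) := by
    have h := (Complex.continuous_abs.tendsto ((b : ℂ))).comp hratio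
    rw [show Complex.abs ((b:ℂ)) = b by simp [Complex.abs_ofReal, abs_of_pos hb0]] at h
    exact h
  -- summability of |α n|
  have hr1 : (1 + b) / 2 < 1 := by linarith
  have hrb : b < (1 + b) / 2 := by linarith
  have hev : ∀ᶠ n in atTop, ‖Complex.abs (α (n + 1))‖ ≤ (1 + b) / 2 * ‖Complex.abs (α n)‖ := by
    filter_upwards [habs.eventually (gt_mem_nhds hrb)] with n hn
    have he : Complex.abs (α (n + 1)) = Complex.abs (α (n + 1) / α n) * Complex.abs (α n) := by
      rw [map_div₀]
      field_simp [hnz n]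
    rw [Real.norm_eq_abs, Real.norm_eq_abs, abs_of_nonneg (AbsoluteValue.nonneg _ _),
      abs_of_nonneg (AbsoluteValue.nonneg _ _), he]
    exact mul_le_mul_of_nonneg_right (le_of_lt hn) (AbsoluteValue.nonneg _ _)
  have hsum : Summable (fun n => Complex.abs (α n)) :=
    summable_of_ratio_norm_eventually_le hr1 hev
  set A := ∑' n, Complex.abs (α n) with hAdef
  have hA0 : 0 ≤ A := tsum_nonneg fun n => AbsoluteValue.nonneg _ _
  set M := Real.exp A with hMdef
  have hM1 : 1 ≤ M := Real.one_le_exp hA0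
  have hM0 : 0 < M := lt_of_lt_of_le one_pos hM1
  have hBM : ∀ n, (∏ k ∈ Finset.range n, (1 + Complex.abs (α k))) ≤ M := by
    intro n
    calc (∏ k ∈ Finset.range n, (1 + Complex.abs (α k)))
        ≤ ∏ k ∈ Finset.range n, Real.exp (Complex.abs (α k)) := by
          refine Finset.prod_le_prod (fun k _ => by positivity) (fun k _ => ?_)
          rw [add_comm]
          exact Real.add_one_le_exp _
      _ = Real.exp (∑ k ∈ Finset.range n, Complex.abs (α k)) := (Real.exp_sum _ _).symm
      _ ≤ M := Real.exp_le_exp.mpr (Summable.sum_le_tsum _ (fun k _ => AbsoluteValue.nonneg _ _) hsum)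
  have hφM : ∀ z : ℂ, Complex.abs z ≤ b - ε →
      ∀ n, Complex.abs ((PhiP α n).eval z) ≤ M ∧ Complex.abs ((PhiStarP α n).eval z) ≤ M := by
    intro z hz n
    have h := phi_bound α z (hz.trans hbε1) n
    exact ⟨h.1.trans (hBM n), h.2.trans (hBM n)⟩
  -- tails
  set t : ℕ → ℝ := fun n => A - ∑ k ∈ Finset.range n, Complex.abs (α k) with htdef
  have ht0 : ∀ n, 0 ≤ t n := fun n =>
    sub_nonneg.mpr (Summable.sum_le_tsum _ (fun k _ => AbsoluteValue.nonneg _ _) hsum)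
  have htt : Tendsto t atTop (nhds 0) := by
    have h := hsum.hasSum.tendsto_sum_nat
    have h2 := (tendsto_const_nhds (x := A) (f := atTop (α := ℕ))).sub h
    rw [← hAdef, sub_self] at h2
    exact h2
  -- difference bound for PhiStar
  have hψdiff : ∀ z : ℂ, Complex.abs z ≤ b - ε → ∀ n m, n ≤ m →
      Complex.abs ((PhiStarP α m).eval z - (PhiStarP α n).eval z) ≤ M * t n := by
    intro z hz n m hnm
    have hz1 : Complex.abs z ≤ 1 := hz.trans hbε1
    have key : Complex.abs ((PhiStarP α m).eval z - (PhiStarP α n).eval z) ≤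
        M * ∑ k ∈ Finset.Ico n m, Complex.abs (α k) := by
      induction m, hnm using Nat.le_induction with
      | base => simp
      | succ m hm ih =>
        have h1 : (PhiStarP α (m + 1)).eval z - (PhiStarP α n).eval z =
            ((PhiStarP α m).eval z - (PhiStarP α n).eval z) - α m * z * (PhiP α m).eval z := by
          rw [eval_phiStarP_succ]; ring
        rw [h1]
        refine le_trans (AbsoluteValue.sub_le_add _ _ _) ?_
        have h2 : Complex.abs (α m * z * (PhiP α m).eval z) ≤ Complex.abs (α m) * M := by
          rw [map_mul, map_mul]
          calc Complex.abs (α m) * Complex.abs z * Complex.abs ((PhiP α m).eval z)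
              ≤ Complex.abs (α m) * 1 * M := by
                refine mul_le_mul ?_ ((hφM z hz m).1) (AbsoluteValue.nonneg _ _) (by positivity)
                exact mul_le_mul_of_nonneg_left hz1 (AbsoluteValue.nonneg _ _)
            _ = Complex.abs (α m) * M := by ring
        rw [Finset.sum_Ico_succ_top hm]
        have := add_le_add ih h2
        calc Complex.abs ((PhiStarP α m).eval z - (PhiStarP α n).eval z) +
              Complex.abs (α m * z * (PhiP α m).eval z)
            ≤ M * (∑ k ∈ Finset.Ico n m, Complex.abs (α k)) + Complex.abs (α m) * M := this
          _ = M * ((∑ k ∈ Finset.Ico n m, Complex.abs (α k)) + Complex.abs (α m)) := by ring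
    refine key.trans ?_
    refine mul_le_mul_of_nonneg_left ?_ (le_of_lt hM0)
    rw [Finset.sum_Ico_eq_sub _ hnm]
    have := Summable.sum_le_tsum (Finset.range m) (fun k _ => AbsoluteValue.nonneg Complex.abs (α k)) hsum
    simp only [htdef]
    linarith
  have h1b : 1 < 1 / b := by
    rw [lt_div_iff₀ hb0]; linarith
  have hz_lt : ∀ z : ℂ, Complex.abs z ≤ b - ε → Complex.abs z < 1 / b := by
    intro z hz; linarith
  -- S approximation bound
  have hSψ : ∀ z : ℂ, Complex.abs z ≤ b - ε → ∀ n,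
      Complex.abs (S z - (PhiStarP α n).eval z) ≤ M * t n := by
    intro z hz n
    have hlim := hS z (hz_lt z hz)
    have hconv : Tendsto (fun m => Complex.abs ((PhiStarP α m).eval z - (PhiStarP α n).eval z))
        atTop (nhds (Complex.abs (S z - (PhiStarP α n).eval z))) :=
      (Complex.continuous_abs.tendsto _).comp (hlim.sub tendsto_const_nhds)
    refine le_of_tendsto hconv ?_
    filter_upwards [eventually_ge_atTop n] with m hm using hψdiff z hz n m hm
  have hSM : ∀ z : ℂ, Complex.abs z ≤ b - ε → Complex.abs (S z) ≤ M := by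
    intro z hz
    have hlim := hS z (hz_lt z hz)
    have hconv : Tendsto (fun m => Complex.abs ((PhiStarP α m).eval z))
        atTop (nhds (Complex.abs (S z))) := (Complex.continuous_abs.tendsto _).comp hlim
    exact le_of_tendsto hconv (Eventually.of_forall fun m => (hφM z hz m).2)
  -- denominator bound
  have hden : ∀ z : ℂ, Complex.abs z ≤ b - ε → ε / b ≤ Complex.abs (1 - z / b) := by
    intro z hz
    have habs_div : Complex.abs (z / b) ≤ (b - ε) / b := by
      rw [map_div₀]
      simp only [Complex.abs_ofReal, abs_of_pos hb0]
      gcongr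
    have htri : (1 : ℝ) ≤ Complex.abs (1 - z / b) + Complex.abs (z / b) := by
      have h := AbsoluteValue.add_le Complex.abs (1 - z / b) (z / b)
      simpa using h
    have heq : 1 - (b - ε) / b = ε / b := by field_simp; ring
    linarith
  have hdenne : ∀ z : ℂ, Complex.abs z ≤ b - ε → (1 : ℂ) - z / b ≠ 0 := by
    intro z hz h
    have := hden z hz
    rw [h] at this
    simp at this
    have : (0:ℝ) < ε / b := by positivity
    linarith
  set G := M * b / ε with hGdef
  have hG0 : 0 < G := by positivity
  have hgM : ∀ z : ℂ, Complex.abs z ≤ b - ε →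
      Complex.abs (-S z * (1 - z / b)⁻¹) ≤ G := by
    intro z hz
    rw [map_mul, map_inv₀, AbsoluteValue.map_neg]
    have h2 : (0:ℝ) < ε / b := by positivity
    have h1 : (0:ℝ) < Complex.abs (1 - z / b) := lt_of_lt_of_le h2 (hden z hz)
    have h3 : (Complex.abs (1 - z / b))⁻¹ ≤ (ε / b)⁻¹ := by
      refine inv_anti₀ (by positivity) (hden z hz)
    calc Complex.abs (S z) * (Complex.abs (1 - z / b))⁻¹
        ≤ M * (ε / b)⁻¹ := mul_le_mul (hSM z hz) h3 (by positivity) (le_of_lt hM0)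
      _ = G := by rw [hGdef]; field_simp
  -- the coefficient sequence
  set c : ℕ → ℂ := fun n => (starRingEnd ℂ) (α (n - 1)) / (starRingEnd ℂ) (α n) with hcdef
  have hfrec : ∀ n (z : ℂ), (PhiP α (n + 1)).eval z / (starRingEnd ℂ) (α (n + 1 - 1)) =
      c n * z * ((PhiP α n).eval z / (starRingEnd ℂ) (α (n - 1))) - (PhiStarP α n).eval z := by
    intro n z
    simp only [Nat.add_sub_cancel, hcdef]
    rw [eval_phiP_succ]
    have h1 : (starRingEnd ℂ) (α n) ≠ 0 := by simpa using hnz n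
    have h2 : (starRingEnd ℂ) (α (n - 1)) ≠ 0 := by simpa using hnz (n - 1)
    field_simp
  have hc : Tendsto c atTop (nhds (((b : ℂ))⁻¹)) := by
    have h1 : Tendsto (fun n => α n / α (n + 1)) atTop (nhds (((b : ℂ))⁻¹)) := by
      have h := hratio.inv₀ hbC
      have he : (fun n => (α (n + 1) / α n)⁻¹) = fun n => α n / α (n + 1) := by
        funext n; rw [inv_div]
      rwa [he] at h
    have h2 : Tendsto (fun n => c (n + 1)) atTop (nhds (((b : ℂ))⁻¹)) := by
      have hcc : (fun n => c (n + 1)) = fun n => (starRingEnd ℂ) (α n / α (n + 1)) := by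
        funext n
        simp only [hcdef, Nat.add_sub_cancel, map_div₀]
      rw [hcc]
      have h3 := ((Complex.continuous_conj).tendsto (((b : ℂ))⁻¹)).comp h1
      have h4 : (starRingEnd ℂ) (((b : ℂ))⁻¹) = ((b : ℂ))⁻¹ := by
        rw [map_inv₀, Complex.conj_ofReal]
      rw [h4] at h3
      exact h3
    exact (tendsto_add_atTop_iff_nat 1).mp h2
  -- functional equation for the limit
  have hgeq : ∀ z : ℂ, Complex.abs z ≤ b - ε →
      -S z * (1 - z / b)⁻¹ = ((b : ℂ))⁻¹ * z * (-S z * (1 - z / b)⁻¹) - S z := by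
    intro z hz
    have h := hdenne z hz
    have h1 : ((b : ℂ))⁻¹ * z = 1 - (1 - z / b) := by
      rw [div_eq_mul_inv]; ring
    have hmul : (1 - z / (b : ℂ)) * (-S z * (1 - z / b)⁻¹) = -S z := by
      rw [mul_comm, mul_assoc, inv_mul_cancel₀ h, mul_one]
    linear_combination (-(-S z * (1 - z / (b : ℂ))⁻¹)) * h1 + hmul
  have habsb : Complex.abs (((b : ℂ))⁻¹) = b⁻¹ := by
    rw [map_inv₀]
    simp [Complex.abs_ofReal, abs_of_pos hb0]
  have habsc : Tendsto (fun n => Complex.abs (c n - ((b : ℂ))⁻¹)) atTop (nhds 0) := by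
    have h0 : Tendsto (fun n => c n - ((b : ℂ))⁻¹) atTop (nhds 0) := by
      simpa using hc.sub (tendsto_const_nhds (x := ((b : ℂ))⁻¹))
    have h := (Complex.continuous_abs.tendsto (0 : ℂ)).comp h0
    simpa [Function.comp_def] using h
  obtain ⟨N, hN⟩ := (Metric.tendsto_atTop.mp habsc) (ε / (2 * b)) (by positivity)
  have hNle : ∀ n, N ≤ n → Complex.abs (c n - ((b : ℂ))⁻¹) ≤ ε / (2 * b) := by
    intro n hn
    have h := hN n hn
    rw [Real.dist_eq, sub_zero, abs_of_nonneg (AbsoluteValue.nonneg _ _)] at h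
    exact le_of_lt h
  set θ' : ℝ := 1 - ε / (2 * b) with hθ'def
  have hεb2 : ε / (2 * b) < 1 := by
    rw [div_lt_one (by positivity)]; linarith
  have hθ'0 : 0 ≤ θ' := by rw [hθ'def]; linarith
  have hθ'1 : θ' < 1 := by
    rw [hθ'def]
    have : 0 < ε / (2 * b) := by positivity
    linarith
  set d : ℕ → ℝ := fun n => Complex.abs (c n - ((b : ℂ))⁻¹) * G + M * t n with hddef
  have hd0 : ∀ n, 0 ≤ d n := by
    intro n
    have h1 := AbsoluteValue.nonneg Complex.abs (c n - ((b : ℂ))⁻¹)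
    have h2 := ht0 n
    rw [hddef]
    positivity
  have hd : Tendsto d atTop (nhds 0) := by
    have h1 := habsc.mul_const G
    have h2 := htt.const_mul M
    have h3 := h1.add h2
    simpa using h3
  -- one-step estimate
  have hstep : ∀ n, N ≤ n → ∀ z : ℂ, Complex.abs z ≤ b - ε →
      Complex.abs ((PhiP α (n + 1)).eval z / (starRingEnd ℂ) (α (n + 1 - 1)) -
          (-S z * (1 - z / b)⁻¹)) ≤
        θ' * Complex.abs ((PhiP α n).eval z / (starRingEnd ℂ) (α (n - 1)) -
          (-S z * (1 - z / b)⁻¹)) + d n := by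
    intro n hn z hz
    have hz1 : Complex.abs z ≤ 1 := hz.trans hbε1
    have hid : (PhiP α (n + 1)).eval z / (starRingEnd ℂ) (α (n + 1 - 1)) -
        (-S z * (1 - z / b)⁻¹) =
        ((b : ℂ))⁻¹ * z * ((PhiP α n).eval z / (starRingEnd ℂ) (α (n - 1)) -
          (-S z * (1 - z / b)⁻¹)) +
        ((c n - ((b : ℂ))⁻¹) * z * ((PhiP α n).eval z / (starRingEnd ℂ) (α (n - 1))) +
          (S z - (PhiStarP α n).eval z)) := by
      linear_combination (hfrec n z) - (hgeq z hz)
    rw [hid]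
    set F := (PhiP α n).eval z / (starRingEnd ℂ) (α (n - 1)) with hFdef
    set Gz := -S z * (1 - z / (b : ℂ))⁻¹ with hGzdef
    set E := Complex.abs (F - Gz) with hEdef
    have hE0 : 0 ≤ E := AbsoluteValue.nonneg _ _
    have hcb := hNle n hn
    have hcb0 := AbsoluteValue.nonneg Complex.abs (c n - ((b : ℂ))⁻¹)
    have hGzb : Complex.abs Gz ≤ G := by rw [hGzdef]; exact hgM z hz
    have hFb : Complex.abs F ≤ G + E := by
      have h'' := AbsoluteValue.add_le Complex.abs (F - Gz) Gz
      rw [sub_add_cancel] at h''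
      rw [hEdef]
      linarith
    have hX : Complex.abs (((b : ℂ))⁻¹ * z * (F - Gz)) ≤ b⁻¹ * (b - ε) * E := by
      rw [map_mul, map_mul, habsb, ← hEdef]
      exact mul_le_mul_of_nonneg_right
        (mul_le_mul_of_nonneg_left hz (by positivity)) hE0
    have hY1 : Complex.abs ((c n - ((b : ℂ))⁻¹) * z * F) ≤
        ε / (2 * b) * E + Complex.abs (c n - ((b : ℂ))⁻¹) * G := by
      rw [map_mul, map_mul]
      calc Complex.abs (c n - ((b : ℂ))⁻¹) * Complex.abs z * Complex.abs F
          ≤ Complex.abs (c n - ((b : ℂ))⁻¹) * 1 * (G + E) := by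
            refine mul_le_mul ?_ hFb (AbsoluteValue.nonneg _ _) (by positivity)
            exact mul_le_mul_of_nonneg_left hz1 hcb0
        _ = Complex.abs (c n - ((b : ℂ))⁻¹) * G + Complex.abs (c n - ((b : ℂ))⁻¹) * E := by
            ring
        _ ≤ Complex.abs (c n - ((b : ℂ))⁻¹) * G + ε / (2 * b) * E := by
            have := mul_le_mul_of_nonneg_right hcb hE0
            linarith
        _ = ε / (2 * b) * E + Complex.abs (c n - ((b : ℂ))⁻¹) * G := by ring
    have hY2 : Complex.abs (S z - (PhiStarP α n).eval z) ≤ M * t n := hSψ z hz n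
    have hT : Complex.abs (((b : ℂ))⁻¹ * z * (F - Gz) +
        ((c n - ((b : ℂ))⁻¹) * z * F + (S z - (PhiStarP α n).eval z))) ≤
        b⁻¹ * (b - ε) * E + (ε / (2 * b) * E +
          (Complex.abs (c n - ((b : ℂ))⁻¹) * G + M * t n)) := by
      refine le_trans (AbsoluteValue.add_le _ _ _) ?_
      have hY := le_trans (AbsoluteValue.add_le Complex.abs
        ((c n - ((b : ℂ))⁻¹) * z * F) (S z - (PhiStarP α n).eval z)) (add_le_add hY1 hY2)
      linarith
    have hcoef : b⁻¹ * (b - ε) + ε / (2 * b) = θ' := by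
      rw [hθ'def]; field_simp; ring
    have hdn : d n = Complex.abs (c n - ((b : ℂ))⁻¹) * G + M * t n := by rw [hddef]
    rw [hdn]
    have hcoefE : b⁻¹ * (b - ε) * E + ε / (2 * b) * E = θ' * E := by
      rw [← hcoef]; ring
    linarith [hT]
  -- the dominating sequence
  let u : ℕ → ℝ := fun j =>
    Nat.rec (M / Complex.abs (α (N - 1)) + G) (fun j uj => θ' * uj + d (j + N)) j
  have hu0 : u 0 = M / Complex.abs (α (N - 1)) + G := rfl
  have husucc : ∀ j, u (j + 1) = θ' * u j + d (j + N) := fun j => rfl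
  have hαN0 : 0 < Complex.abs (α (N - 1)) := by
    simpa [AbsoluteValue.pos_iff] using hnz (N - 1)
  have hupos : ∀ j, 0 ≤ u j := by
    intro j
    induction j with
    | zero => rw [hu0]; positivity
    | succ j ih =>
      rw [husucc]
      have := hd0 (j + N)
      nlinarith
  have hub : ∀ j, ∀ z : ℂ, Complex.abs z ≤ b - ε →
      Complex.abs ((PhiP α (j + N)).eval z / (starRingEnd ℂ) (α (j + N - 1)) -
        (-S z * (1 - z / b)⁻¹)) ≤ u j := by
    intro j
    induction j with
    | zero =>
      intro z hz
      simp only [zero_add, hu0]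
      refine le_trans (AbsoluteValue.sub_le_add _ _ _) ?_
      have h1 : Complex.abs ((PhiP α N).eval z / (starRingEnd ℂ) (α (N - 1))) ≤
          M / Complex.abs (α (N - 1)) := by
        rw [map_div₀, Complex.abs_conj]
        exact (div_le_div_iff_of_pos_right hαN0).mpr ((hφM z hz N).1)
      exact add_le_add h1 (hgM z hz)
    | succ j ih =>
      intro z hz
      have hidx : j + 1 + N = j + N + 1 := by omega
      rw [hidx, husucc]
      have hstepj := hstep (j + N) (Nat.le_add_left N j) z hz
      have hihz := ih z hz
      have := mul_le_mul_of_nonneg_left hihz hθ'0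
      linarith
  have hdshift : Tendsto (fun j => d (j + N)) atTop (nhds 0) :=
    hd.comp (tendsto_add_atTop_nat N)
  have hulim : Tendsto u atTop (nhds 0) :=
    tendsto_zero_of_contract hθ'0 hθ'1 hupos hdshift (fun j => le_of_eq (husucc j))
  rw [Metric.tendstoUniformlyOn_iff]
  intro η hη
  obtain ⟨J, hJ⟩ := (Metric.tendsto_atTop.mp hulim) η hη
  rw [eventually_atTop]
  refine ⟨J + N, fun n hn z hz => ?_⟩
  have hmem : Complex.abs z ≤ b - ε := hz
  have hidx : n - N + N = n := by omega
  have h1 := hub (n - N) z hmem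
  rw [hidx] at h1
  have h2 := hJ (n - N) (by omega)
  rw [Real.dist_eq, sub_zero, abs_of_nonneg (hupos _)] at h2
  rw [Complex.dist_eq, ← Complex.abs_apply]
  have h3 : Complex.abs (-S z * (1 - z / (b : ℂ))⁻¹ -
      (PhiP α n).eval z / (starRingEnd ℂ) (α (n - 1))) =
      Complex.abs ((PhiP α n).eval z / (starRingEnd ℂ) (α (n - 1)) -
      (-S z * (1 - z / (b : ℂ))⁻¹)) := AbsoluteValue.map_sub _ _ _
  rw [h3]
  linarith
end
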